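/- Let Y and X be finite nonempty sets, let p be a probability mass function on Y, let (φ_y)_{y∈Y} be probability mass functions on X, and let Q be a probability mass function on X. Then D(Σ_{y∈Y} p(y) φ_y ‖ Q) + log |Y| ≥ min { D(φ_y‖Q) : y ∈ Y, p(y) > 0 }, as an inequality in [0,∞]. -/

import Mathlib

open scoped BigOperators ENNReal

/-- Kullback–Leibler divergence between two probability mass functions on a finite set,
valued in `[0,∞]`, with the conventions `0 · log(0/q) = 0` and `D(P‖Q) = ∞` if `P` is not
absolutely continuous with respect to `Q`. -/
noncomputable def klDiv {X : Type*} [Fintype X] (P Q : X → ℝ) : ℝ≥0∞ :=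
  if ∀ x, Q x = 0 → P x = 0 then
    ENNReal.ofReal (∑ x, P x * Real.log (P x / Q x))
  else ⊤

theorem klDiv_mixture_add_log_card_ge_min
    {Y X : Type*} [Fintype Y] [Fintype X] [Nonempty Y] [Nonempty X]
    (p : Y → ℝ) (φ : Y → X → ℝ) (Q : X → ℝ)
    (hp0 : ∀ y, 0 ≤ p y) (hp1 : ∑ y, p y = 1)
    (hφ0 : ∀ y x, 0 ≤ φ y x) (hφ1 : ∀ y, ∑ x, φ y x = 1)
    (hQ0 : ∀ x, 0 ≤ Q x) (hQ1 : ∑ x, Q x = 1) :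
    ⨅ y : {y : Y // 0 < p y}, klDiv (φ y) Q ≤
      klDiv (fun x => ∑ y, p y * φ y x) Q
        + ENNReal.ofReal (Real.log (Fintype.card Y)) := by
  classical
  set M : X → ℝ := fun x => ∑ y, p y * φ y x with hM
  by_cases hac : ∀ x, Q x = 0 → M x = 0
  swap
  · have : klDiv M Q = ⊤ := by rw [klDiv, if_neg hac]
    simp [this]
  -- main case
  set n : ℝ := (Fintype.card Y : ℝ) with hn
  have hn1 : (1 : ℝ) ≤ n := by
    have : 1 ≤ Fintype.card Y := Fintype.card_pos
    rw [hn]; exact_mod_cast this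
  have hnpos : (0 : ℝ) < n := lt_of_lt_of_le one_pos hn1
  have hφac : ∀ y, 0 < p y → ∀ x, Q x = 0 → φ y x = 0 := by
    intro y hy x hQx
    have hMx : M x = 0 := hac x hQx
    have h0 : p y * φ y x = 0 :=
      (Finset.sum_eq_zero_iff_of_nonneg
        (fun i _ => mul_nonneg (hp0 i) (hφ0 i x))).mp hMx y (Finset.mem_univ y)
    rcases mul_eq_zero.mp h0 with h | h
    · exact absurd h hy.ne'
    · exact h
  have hpφleM : ∀ y x, p y * φ y x ≤ M x := fun y x =>
    Finset.single_le_sum (f := fun i => p i * φ i x)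
      (fun i _ => mul_nonneg (hp0 i) (hφ0 i x)) (Finset.mem_univ y)
  set S : Y → ℝ := fun y => ∑ x, φ y x * Real.log (φ y x / Q x) with hS
  set DM : ℝ := ∑ x, M x * Real.log (M x / Q x) with hDM
  -- Step A: per-y bound
  have stepA : ∀ y, p y * S y ≤
      (∑ x, p y * φ y x * Real.log (M x / Q x)) + p y * Real.log (1 / p y) := by
    intro y
    rcases eq_or_lt_of_le (hp0 y) with hy | hy
    · simp [← hy]
    · have key : ∀ x, p y * (φ y x * Real.log (φ y x / Q x)) ≤
          p y * φ y x * Real.log (M x / Q x) + p y * φ y x * Real.log (1 / p y) := by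
        intro x
        rcases eq_or_lt_of_le (hφ0 y x) with hx | hx
        · simp [← hx]
        · have hQx : 0 < Q x := by
            rcases (hQ0 x).eq_or_lt with h | h
            · exact absurd (hφac y hy x h.symm) hx.ne'
            · exact h
          have hMx : 0 < M x := lt_of_lt_of_le (by positivity) (hpφleM y x)
          have hdiv : φ y x / Q x ≤ M x / (p y * Q x) := by
            rw [div_le_div_iff₀ hQx (by positivity)]
            nlinarith [hpφleM y x]
          have hlog : Real.log (φ y x / Q x) ≤ Real.log (M x / (p y * Q x)) :=
            Real.log_le_log (by positivity) hdiv
          have hsplit : Real.log (M x / (p y * Q x)) =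
              Real.log (M x / Q x) + Real.log (1 / p y) := by
            rw [show M x / (p y * Q x) = (M x / Q x) * (1 / p y) by
              field_simp]
            rw [Real.log_mul (by positivity) (by positivity)]
          have hco : 0 ≤ p y * φ y x := by positivity
          calc p y * (φ y x * Real.log (φ y x / Q x))
              = (p y * φ y x) * Real.log (φ y x / Q x) := by ring
            _ ≤ (p y * φ y x) * (Real.log (M x / Q x) + Real.log (1 / p y)) := by
                rw [← hsplit]; exact mul_le_mul_of_nonneg_left (hsplit ▸ hlog) hco
            _ = p y * φ y x * Real.log (M x / Q x) + p y * φ y x * Real.log (1 / p y) := by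
                ring
      calc p y * S y = ∑ x, p y * (φ y x * Real.log (φ y x / Q x)) := by
            rw [hS, Finset.mul_sum]
        _ ≤ ∑ x, (p y * φ y x * Real.log (M x / Q x) + p y * φ y x * Real.log (1 / p y)) :=
            Finset.sum_le_sum fun x _ => key x
        _ = (∑ x, p y * φ y x * Real.log (M x / Q x)) +
              ∑ x, φ y x * (p y * Real.log (1 / p y)) := by
            rw [Finset.sum_add_distrib]
            congr 1
            exact Finset.sum_congr rfl fun x _ => by ring
        _ = (∑ x, p y * φ y x * Real.log (M x / Q x)) + p y * Real.log (1 / p y) := by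
            rw [← Finset.sum_mul, hφ1 y, one_mul]
  -- Step B: swap sums
  have stepB : (∑ y, ∑ x, p y * φ y x * Real.log (M x / Q x)) = DM := by
    rw [Finset.sum_comm]
    refine Finset.sum_congr rfl fun x _ => ?_
    rw [← Finset.sum_mul]
  -- Step C: entropy bound
  have stepC : (∑ y, p y * Real.log (1 / p y)) ≤ Real.log n := by
    have key : ∀ y, p y * Real.log (1 / p y) ≤ 1 / n - p y + p y * Real.log n := by
      intro y
      rcases eq_or_lt_of_le (hp0 y) with hy | hy
      · rw [← hy]; simp; positivity
      · have h1 : Real.log (1 / (p y * n)) ≤ 1 / (p y * n) - 1 :=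
          Real.log_le_sub_one_of_pos (by positivity)
        have h2 : Real.log (1 / (p y * n)) = Real.log (1 / p y) - Real.log n := by
          rw [one_div, one_div, Real.log_inv, Real.log_inv,
            Real.log_mul hy.ne' hnpos.ne']
          ring
        have h3 : p y * Real.log (1 / (p y * n)) ≤ p y * (1 / (p y * n) - 1) :=
          mul_le_mul_of_nonneg_left h1 hy.le
        have h4 : p y * (1 / (p y * n) - 1) = 1 / n - p y := by
          field_simp
        nlinarith [h3, h4, h2]
    calc (∑ y, p y * Real.log (1 / p y))
        ≤ ∑ y, (1 / n - p y + p y * Real.log n) := Finset.sum_le_sum fun y _ => key y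
      _ = (Fintype.card Y : ℝ) * (1 / n) - 1 + Real.log n := by
          rw [Finset.sum_add_distrib, Finset.sum_sub_distrib, ← Finset.sum_mul, hp1,
            Finset.sum_const, Finset.card_univ, nsmul_eq_mul, one_mul]
      _ = Real.log n := by
          rw [← hn]
          field_simp
          ring
  -- combine
  have total : (∑ y, p y * S y) ≤ DM + Real.log n := by
    calc (∑ y, p y * S y)
        ≤ ∑ y, ((∑ x, p y * φ y x * Real.log (M x / Q x)) + p y * Real.log (1 / p y)) :=
          Finset.sum_le_sum fun y _ => stepA y
      _ = (∑ y, ∑ x, p y * φ y x * Real.log (M x / Q x)) + ∑ y, p y * Real.log (1 / p y) :=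
          Finset.sum_add_distrib
      _ ≤ DM + Real.log n := by rw [stepB]; exact add_le_add le_rfl stepC
  -- find a good y
  obtain ⟨y₀, hy₀, hSy₀⟩ : ∃ y, 0 < p y ∧ S y ≤ DM + Real.log n := by
    by_contra hcon
    push_neg at hcon
    obtain ⟨y1, hy1⟩ : ∃ y, p y ≠ 0 := by
      by_contra hall
      push_neg at hall
      simp [hall] at hp1
    have hy1' : 0 < p y1 := lt_of_le_of_ne (hp0 y1) (Ne.symm hy1)
    have hlt : (∑ y, p y * (DM + Real.log n)) < ∑ y, p y * S y := by
      refine Finset.sum_lt_sum (fun i _ => ?_) ⟨y1, Finset.mem_univ y1, ?_⟩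
      · rcases eq_or_lt_of_le (hp0 i) with h | h
        · simp [← h]
        · exact mul_le_mul_of_nonneg_left (hcon i h).le h.le
      · exact mul_lt_mul_of_pos_left (hcon y1 hy1') hy1'
    rw [← Finset.sum_mul, hp1, one_mul] at hlt
    exact absurd total (not_le.mpr hlt)
  haveI : Nonempty {y : Y // 0 < p y} := ⟨⟨y₀, hy₀⟩⟩
  have heq : klDiv (φ y₀) Q = ENNReal.ofReal (S y₀) := by
    rw [klDiv, if_pos (hφac y₀ hy₀)]
  have hMeq : klDiv M Q = ENNReal.ofReal DM := by
    rw [klDiv, if_pos hac]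
  calc ⨅ y : {y : Y // 0 < p y}, klDiv (φ y) Q
      ≤ klDiv (φ y₀) Q := iInf_le _ (⟨y₀, hy₀⟩ : {y : Y // 0 < p y})
    _ = ENNReal.ofReal (S y₀) := heq
    _ ≤ ENNReal.ofReal (DM + Real.log n) := ENNReal.ofReal_le_ofReal hSy₀
    _ ≤ ENNReal.ofReal DM + ENNReal.ofReal (Real.log n) := ENNReal.ofReal_add_le
    _ = klDiv M Q + ENNReal.ofReal (Real.log n) := by rw [hMeq]
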